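/- Let d ≥ 2, let 𝒞 be a symmetric positive definite d×d real matrix with B = 𝒞^{-1/2}, and let M be the largest eigenvalue of 𝒞^{-1}. Fix x ∈ ℝ^d, and for v ∈ 𝕊^{d-1} let μ_{x,v} be the one-dimensional Gaussian measure with mean -⟨Bx, Bv⟩/‖Bv‖² and variance ‖Bv‖^{-2}. Then for every ε ∈ (0,1], ∫_{𝕊^{d-1}} ∫_{[-ε,ε]} log(1/|h|) dμ_{x,v}(h) dσ_{d-1}(v) ≤ 2·ε·(1 - log ε)·M^{1/2}. -/

import Mathlib

open MeasureTheory ProbabilityTheory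
open scoped RealInnerProductSpace ENNReal

/-- The uniform (normalized) probability measure on the unit sphere of `ℝ^d`. -/
noncomputable def sphereUniform (d : ℕ) :
    Measure (Metric.sphere (0 : EuclideanSpace ℝ (Fin d)) 1) :=
  ((volume : Measure (EuclideanSpace ℝ (Fin d))).toSphere Set.univ)⁻¹ •
    (volume : Measure (EuclideanSpace ℝ (Fin d))).toSphere

section Aux

open Set Real Metric

lemma neglog_intOn {ε : ℝ} (hε : ε ∈ Set.Ioc (0:ℝ) 1) :
    IntegrableOn (fun x : ℝ => -Real.log x) (Set.Ioc 0 ε) volume := by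
  have hcont : ContinuousOn (fun x : ℝ => x - x * Real.log x) (Set.Icc 0 ε) :=
    (continuous_id.sub Real.continuous_mul_log).continuousOn
  have hderiv : ∀ x ∈ Set.Ioo (0:ℝ) ε, HasDerivAt (fun x : ℝ => x - x * Real.log x)
      (-Real.log x) x := by
    intro x hx
    have h1 : HasDerivAt (fun x : ℝ => x * Real.log x) (Real.log x + 1) x :=
      Real.hasDerivAt_mul_log hx.1.ne'
    have := (hasDerivAt_id x).sub h1
    exact this.congr_deriv (by ring)
  exact intervalIntegral.integrableOn_deriv_of_nonneg hcont hderiv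
    (fun x hx => neg_nonneg.2 (Real.log_nonpos hx.1.le (hx.2.le.trans hε.2)))

lemma neglog_intervalIntegrable {ε : ℝ} (hε : ε ∈ Set.Ioc (0:ℝ) 1) :
    IntervalIntegrable (fun x : ℝ => -Real.log x) volume 0 ε := by
  rw [intervalIntegrable_iff_integrableOn_Ioc_of_le hε.1.le]
  exact neglog_intOn hε

lemma neglog_integral {ε : ℝ} (hε : ε ∈ Set.Ioc (0:ℝ) 1) :
    ∫ x in (0:ℝ)..ε, -Real.log x = ε - ε * Real.log ε := by
  have hcont : ContinuousOn (fun x : ℝ => x - x * Real.log x) (Set.Icc 0 ε) :=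
    (continuous_id.sub Real.continuous_mul_log).continuousOn
  have hderiv : ∀ x ∈ Set.Ioo (0:ℝ) ε, HasDerivAt (fun x : ℝ => x - x * Real.log x)
      (-Real.log x) x := by
    intro x hx
    have h1 : HasDerivAt (fun x : ℝ => x * Real.log x) (Real.log x + 1) x :=
      Real.hasDerivAt_mul_log hx.1.ne'
    have := (hasDerivAt_id x).sub h1
    exact this.congr_deriv (by ring)
  have := intervalIntegral.integral_eq_sub_of_hasDerivAt_of_le hε.1.le hcont hderiv
    (neglog_intervalIntegrable hε)
  simpa using this

lemma f_eq_on_nonneg {x : ℝ} (hx : 0 ≤ x) : Real.log (1/|x|) = -Real.log x := by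
  rw [abs_of_nonneg hx, one_div, Real.log_inv]

lemma f_even (x : ℝ) : Real.log (1/|(-x)|) = Real.log (1/|x|) := by rw [abs_neg]

lemma f_II1 {ε : ℝ} (hε : ε ∈ Set.Ioc (0:ℝ) 1) :
    IntervalIntegrable (fun h : ℝ => Real.log (1/|h|)) volume 0 ε := by
  rw [intervalIntegrable_iff_integrableOn_Ioc_of_le hε.1.le]
  exact (neglog_intOn hε).congr_fun (fun x hx => (f_eq_on_nonneg hx.1.le).symm)
    measurableSet_Ioc

lemma f_II2 {ε : ℝ} (hε : ε ∈ Set.Ioc (0:ℝ) 1) :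
    IntervalIntegrable (fun h : ℝ => Real.log (1/|h|)) volume (-ε) 0 := by
  have : IntervalIntegrable (fun h : ℝ => Real.log (1/|(-h)|)) volume (-(-ε)) (-0) := by
    simp only [neg_neg, neg_zero]
    exact (f_II1 hε).symm.congr (fun x _ => (f_even x).symm)
  exact (IntervalIntegrable.iff_comp_neg (by simp)).mpr this

lemma f_int01 {ε : ℝ} (hε : ε ∈ Set.Ioc (0:ℝ) 1) :
    ∫ x in (0:ℝ)..ε, Real.log (1/|x|) = ε - ε * Real.log ε := by
  rw [← neglog_integral hε]
  apply intervalIntegral.integral_congr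
  intro x hx
  rw [Set.uIcc_of_le hε.1.le] at hx
  exact f_eq_on_nonneg hx.1

lemma f_integral_Icc {ε : ℝ} (hε : ε ∈ Set.Ioc (0:ℝ) 1) :
    ∫ x in Set.Icc (-ε) ε, Real.log (1/|x|) = 2 * ε * (1 - Real.log ε) := by
  have hle : -ε ≤ ε := by linarith [hε.1]
  rw [MeasureTheory.integral_Icc_eq_integral_Ioc, ← intervalIntegral.integral_of_le hle]
  have hsplit := intervalIntegral.integral_add_adjacent_intervals (f_II2 hε) (f_II1 hε)
  have hneg : ∫ x in (-ε)..(0:ℝ), Real.log (1/|x|) = ∫ x in (0:ℝ)..ε, Real.log (1/|x|) := by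
    have := intervalIntegral.integral_comp_neg (a := (0:ℝ)) (b := ε)
      (f := fun h : ℝ => Real.log (1/|h|))
    simp only [neg_zero] at this
    rw [← this]
    exact intervalIntegral.integral_congr (fun x _ => f_even x)
  rw [← hsplit, hneg, f_int01 hε]
  ring

lemma f_integrableOn_Icc {ε : ℝ} (hε : ε ∈ Set.Ioc (0:ℝ) 1) :
    IntegrableOn (fun h : ℝ => Real.log (1/|h|)) (Set.Icc (-ε) ε) volume := by
  have hle : -ε ≤ ε := by linarith [hε.1]
  have h := (f_II2 hε).trans (f_II1 hε)
  rw [intervalIntegrable_iff_integrableOn_Ioc_of_le hle] at h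
  rwa [integrableOn_Icc_iff_integrableOn_Ioc]

lemma f_nonneg_on {ε : ℝ} (hε : ε ∈ Set.Ioc (0:ℝ) 1) {x : ℝ} (hx : x ∈ Set.Icc (-ε) ε) :
    0 ≤ Real.log (1/|x|) := by
  rcases eq_or_ne x 0 with rfl | hx0
  · simp
  · apply Real.log_nonneg
    rw [le_div_iff₀ (abs_pos.2 hx0), one_mul]
    exact (abs_le.2 ⟨hx.1, hx.2⟩).trans hε.2

lemma f_measurable : Measurable (fun h : ℝ => Real.log (1/|h|)) :=
  Real.measurable_log.comp (measurable_const.div (_root_.continuous_abs.measurable))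

lemma gaussianPDFReal_le (m c : ℝ) (hc : 0 < c) (x : ℝ) :
    gaussianPDFReal m ((c^2)⁻¹).toNNReal x ≤ c := by
  set V : NNReal := ((c^2)⁻¹).toNNReal with hVdef
  have hVr : (V : ℝ) = (c^2)⁻¹ := Real.coe_toNNReal _ (by positivity)
  rw [gaussianPDFReal]
  have h1 : Real.exp (-(x - m)^2 / (2 * (V:ℝ))) ≤ 1 := by
    rw [Real.exp_le_one_iff]
    apply div_nonpos_of_nonpos_of_nonneg
    · simpa using sq_nonneg (x - m)
    · positivity
  have h2 : (Real.sqrt (2 * π * V))⁻¹ ≤ c := by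
    have hpi : (1:ℝ) ≤ 2 * π := by nlinarith [Real.pi_gt_three]
    have hVpos : (0:ℝ) < V := by rw [hVr]; positivity
    have hs : c⁻¹ ≤ Real.sqrt (2 * π * V) := by
      have : Real.sqrt (V:ℝ) = c⁻¹ := by
        rw [hVr, Real.sqrt_inv, Real.sqrt_sq hc.le]
      rw [← this]
      apply Real.sqrt_le_sqrt
      nlinarith
    calc (Real.sqrt (2 * π * V))⁻¹ ≤ (c⁻¹)⁻¹ := by
          apply inv_anti₀ (by positivity) hs
      _ = c := inv_inv c
  calc (Real.sqrt (2 * π * V))⁻¹ * Real.exp (-(x - m)^2 / (2 * (V:ℝ)))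
      ≤ (Real.sqrt (2 * π * V))⁻¹ * 1 := by
        apply mul_le_mul_of_nonneg_left h1 (by positivity)
    _ = (Real.sqrt (2 * π * V))⁻¹ := mul_one _
    _ ≤ c := h2

lemma gaussian_inner_bound (m c : ℝ) (hc : 0 < c) {ε : ℝ} (hε : ε ∈ Set.Ioc (0:ℝ) 1) :
    ∫ h in Set.Icc (-ε) ε, Real.log (1/|h|) ∂gaussianReal m ((c^2)⁻¹).toNNReal
      ≤ 2 * ε * (1 - Real.log ε) * c := by
  set V : NNReal := ((c^2)⁻¹).toNNReal with hVdef
  have hV : V ≠ 0 := by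
    simp only [hVdef, ne_eq, Real.toNNReal_eq_zero, not_le]
    positivity
  rw [gaussianReal_of_var_ne_zero m hV, restrict_withDensity measurableSet_Icc]
  have hpdf_meas : Measurable fun x => (gaussianPDFReal m V x).toNNReal :=
    (measurable_gaussianPDFReal m V).real_toNNReal
  have hdens : gaussianPDF m V = fun x => ((gaussianPDFReal m V x).toNNReal : ENNReal) := by
    funext x; rw [gaussianPDF_def]; rfl
  rw [hdens, integral_withDensity_eq_integral_smul hpdf_meas]
  have hptwise : ∀ x ∈ Set.Icc (-ε) ε,
      (gaussianPDFReal m V x).toNNReal • Real.log (1/|x|) ≤ c * Real.log (1/|x|) := by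
    intro x hx
    rw [NNReal.smul_def, smul_eq_mul,
      Real.coe_toNNReal _ (gaussianPDFReal_nonneg m V x)]
    exact mul_le_mul_of_nonneg_right (gaussianPDFReal_le m c hc x) (f_nonneg_on hε hx)
  have h2 : IntegrableOn (fun x => c * Real.log (1/|x|)) (Set.Icc (-ε) ε) volume :=
    (f_integrableOn_Icc hε).const_mul c
  have h1 : IntegrableOn (fun x => (gaussianPDFReal m V x).toNNReal • Real.log (1/|x|))
      (Set.Icc (-ε) ε) volume := by
    apply Integrable.mono h2
    · exact ((hpdf_meas.coe_nnreal_real.mul f_measurable)).aestronglyMeasurable.congr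
        (by filter_upwards with x using by rw [NNReal.smul_def, smul_eq_mul]; rfl)
    · filter_upwards [ae_restrict_mem measurableSet_Icc] with x hx
      have hf0 := f_nonneg_on hε hx
      have hp0 := gaussianPDFReal_nonneg m V x
      rw [NNReal.smul_def, smul_eq_mul, Real.coe_toNNReal _ hp0,
        Real.norm_eq_abs, Real.norm_eq_abs, abs_of_nonneg (mul_nonneg hp0 hf0),
        abs_of_nonneg (mul_nonneg hc.le hf0)]
      exact mul_le_mul_of_nonneg_right (gaussianPDFReal_le m c hc x) hf0
  calc ∫ x in Set.Icc (-ε) ε, (gaussianPDFReal m V x).toNNReal • Real.log (1/|x|)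
      ≤ ∫ x in Set.Icc (-ε) ε, c * Real.log (1/|x|) :=
        setIntegral_mono_on h1 h2 measurableSet_Icc hptwise
    _ = c * ∫ x in Set.Icc (-ε) ε, Real.log (1/|x|) := by rw [integral_const_mul]
    _ = c * (2 * ε * (1 - Real.log ε)) := by rw [f_integral_Icc hε]
    _ = 2 * ε * (1 - Real.log ε) * c := by ring

lemma key_rayleigh {d : ℕ} (C B : Matrix (Fin d) (Fin d) ℝ) (hB : B.PosDef)
    (hBC : B * B = C⁻¹) (z : EuclideanSpace ℝ (Fin d)) :
    ⟪Matrix.toEuclideanLin C⁻¹ z, z⟫ = ‖Matrix.toEuclideanLin B z‖^2 := by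
  have hcomp : Matrix.toEuclideanLin C⁻¹ z
      = Matrix.toEuclideanLin B (Matrix.toEuclideanLin B z) := by
    rw [← hBC, Matrix.toEuclideanLin_apply, Matrix.toEuclideanLin_apply,
      Matrix.toEuclideanLin_apply]
    simp [Matrix.mulVec_mulVec]
  have hsym : (Matrix.toEuclideanLin B).IsSymmetric :=
    Matrix.isHermitian_iff_isSymmetric.1 hB.isHermitian
  rw [hcomp, hsym (Matrix.toEuclideanLin B z) z, real_inner_self_eq_norm_sq]

lemma sphereUniform_univ {d : ℕ} (hd : 2 ≤ d) : sphereUniform d Set.univ = 1 := by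
  have h0 : (volume : Measure (EuclideanSpace ℝ (Fin d))).toSphere Set.univ ≠ 0 := by
    rw [Measure.toSphere_apply_univ]
    refine mul_ne_zero ?_ (measure_ball_pos _ _ one_pos).ne'
    simp [finrank_euclideanSpace]
    omega
  have htop : (volume : Measure (EuclideanSpace ℝ (Fin d))).toSphere Set.univ ≠ ⊤ :=
    measure_ne_top _ _
  rw [sphereUniform, Measure.smul_apply, smul_eq_mul, ENNReal.inv_mul_cancel h0 htop]

end Aux

/-- averaged logarithmic bound for the scalar displacement distribution of
Hit-and-Run in a Gaussian target; `M` is the largest eigenvalue of `𝒞⁻¹` (characterized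
as the greatest Rayleigh-quotient value). -/
theorem hit_and_run_log_overlap_bound {d : ℕ} (hd : 2 ≤ d)
    (C B : Matrix (Fin d) (Fin d) ℝ) (hC : C.PosDef) (hB : B.PosDef)
    (hBC : B * B = C⁻¹) (M : ℝ)
    (hM : IsGreatest {r : ℝ | ∃ z : EuclideanSpace ℝ (Fin d), ‖z‖ = 1 ∧
      ⟪Matrix.toEuclideanLin C⁻¹ z, z⟫ = r} M)
    (x : EuclideanSpace ℝ (Fin d)) (ε : ℝ) (hε : ε ∈ Set.Ioc (0 : ℝ) 1) :
    ∫ v, (∫ h in Set.Icc (-ε) ε, Real.log (1 / |h|)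
        ∂gaussianReal
          (-⟪Matrix.toEuclideanLin B x, Matrix.toEuclideanLin B ↑v⟫ /
            ‖Matrix.toEuclideanLin B ↑v‖ ^ 2)
          ((‖Matrix.toEuclideanLin B ↑v‖ ^ 2)⁻¹).toNNReal) ∂sphereUniform d ≤
      2 * ε * (1 - Real.log ε) * Real.sqrt M := by
  have hlog : Real.log ε ≤ 0 := Real.log_nonpos hε.1.le hε.2
  have hK0 : 0 ≤ 2 * ε * (1 - Real.log ε) := by nlinarith [hε.1]
  have hMs : 0 ≤ Real.sqrt M := Real.sqrt_nonneg M
  have hBinj : Function.Injective (B.mulVec) :=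
    Matrix.mulVec_injective_iff_isUnit.2 hB.isUnit
  have hbound : ∀ v : Metric.sphere (0 : EuclideanSpace ℝ (Fin d)) 1,
      (∫ h in Set.Icc (-ε) ε, Real.log (1 / |h|)
        ∂gaussianReal
          (-⟪Matrix.toEuclideanLin B x, Matrix.toEuclideanLin B ↑v⟫ /
            ‖Matrix.toEuclideanLin B ↑v‖ ^ 2)
          ((‖Matrix.toEuclideanLin B ↑v‖ ^ 2)⁻¹).toNNReal)
        ≤ 2 * ε * (1 - Real.log ε) * Real.sqrt M := by
    intro v
    have hv1 : ‖(v : EuclideanSpace ℝ (Fin d))‖ = 1 :=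
      mem_sphere_zero_iff_norm.mp v.2
    set c : ℝ := ‖Matrix.toEuclideanLin B (v : EuclideanSpace ℝ (Fin d))‖ with hcdef
    have hcpos : 0 < c := by
      rw [hcdef, norm_pos_iff]
      intro h0
      have : B.mulVec (WithLp.equiv 2 (Fin d → ℝ) (v : EuclideanSpace ℝ (Fin d))) = 0 := by
        have := congrArg (WithLp.equiv 2 (Fin d → ℝ)) h0
        simpa [Matrix.toEuclideanLin_apply] using this
      have hveq : (WithLp.equiv 2 (Fin d → ℝ) (v : EuclideanSpace ℝ (Fin d))) = 0 := by
        apply hBinj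
        simpa [Matrix.mulVec_zero] using this
      have : (v : EuclideanSpace ℝ (Fin d)) = 0 := by
        simpa using congrArg (WithLp.equiv 2 (Fin d → ℝ)).symm hveq
      rw [this] at hv1
      simp at hv1
    have hcM : c ≤ Real.sqrt M := by
      have hsq : c ^ 2 ≤ M := by
        rw [hcdef, ← key_rayleigh C B hB hBC]
        exact hM.2 ⟨(v : EuclideanSpace ℝ (Fin d)), hv1, rfl⟩
      have hM0 : 0 ≤ M := le_trans (sq_nonneg c) hsq
      exact (Real.le_sqrt hcpos.le hM0).mpr hsq
    calc (∫ h in Set.Icc (-ε) ε, Real.log (1 / |h|)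
        ∂gaussianReal
          (-⟪Matrix.toEuclideanLin B x, Matrix.toEuclideanLin B ↑v⟫ /
            ‖Matrix.toEuclideanLin B ↑v‖ ^ 2)
          ((‖Matrix.toEuclideanLin B ↑v‖ ^ 2)⁻¹).toNNReal)
        ≤ 2 * ε * (1 - Real.log ε) * c :=
          gaussian_inner_bound _ c hcpos hε
      _ ≤ 2 * ε * (1 - Real.log ε) * Real.sqrt M :=
          mul_le_mul_of_nonneg_left hcM hK0
  by_cases hint : Integrable (fun v : Metric.sphere (0 : EuclideanSpace ℝ (Fin d)) 1 =>
      (∫ h in Set.Icc (-ε) ε, Real.log (1 / |h|)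
        ∂gaussianReal
          (-⟪Matrix.toEuclideanLin B x, Matrix.toEuclideanLin B ↑v⟫ /
            ‖Matrix.toEuclideanLin B ↑v‖ ^ 2)
          ((‖Matrix.toEuclideanLin B ↑v‖ ^ 2)⁻¹).toNNReal)) (sphereUniform d)
  · have : IsProbabilityMeasure (sphereUniform d) := ⟨sphereUniform_univ hd⟩
    calc ∫ v, (∫ h in Set.Icc (-ε) ε, Real.log (1 / |h|)
        ∂gaussianReal
          (-⟪Matrix.toEuclideanLin B x, Matrix.toEuclideanLin B ↑v⟫ /
            ‖Matrix.toEuclideanLin B ↑v‖ ^ 2)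
          ((‖Matrix.toEuclideanLin B ↑v‖ ^ 2)⁻¹).toNNReal) ∂sphereUniform d
        ≤ ∫ _v : Metric.sphere (0 : EuclideanSpace ℝ (Fin d)) 1,
            (2 * ε * (1 - Real.log ε) * Real.sqrt M) ∂sphereUniform d :=
          integral_mono hint (integrable_const _) hbound
      _ = 2 * ε * (1 - Real.log ε) * Real.sqrt M := by
          rw [integral_const, measureReal_def, sphereUniform_univ hd]
          simp
  · rw [integral_undef hint]
    exact mul_nonneg hK0 hMs
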